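/- arXiv:2111.01692 — 4 statements merged into one kernel-verified Lean document; each statement's English description precedes it below -/
import Mathlib

section
/- Let A and M be real symmetric positive definite n×n matrices and define f(B) = trace(A B) + trace(M B⁻¹) on the set of real symmetric positive definite n×n matrices. Then f is strictly geodesically midpoint-convex: for all symmetric positive definite B0 ≠ B1, f(G(B0,B1)) < (1/2) f(B0) + (1/2) f(B1), where G(B0,B1) = B0^{1/2} (B0^{-1/2} B1 B0^{-1/2})^{1/2} B0^{1/2} is the geometric mean (the midpoint of the geodesic joining B0 and B1 on the positive definite manifold). -/
open Matrix

/-- The unique symmetric positive semidefinite square root of a positive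
semidefinite real matrix (junk value `0` off the positive semidefinite cone). -/
noncomputable def msqrt {n : ℕ} (A : Matrix (Fin n) (Fin n) ℝ) :
    Matrix (Fin n) (Fin n) ℝ :=
  letI := Classical.propDecidable A.PosSemidef
  if h : A.PosSemidef then
    (h.1.eigenvectorUnitary : Matrix (Fin n) (Fin n) ℝ) *
      diagonal ((↑) ∘ (√·) ∘ h.1.eigenvalues) *
      (star h.1.eigenvectorUnitary : Matrix (Fin n) (Fin n) ℝ)
  else 0

/-- The geometric mean `G(A,M) = A^{1/2} (A^{-1/2} M A^{-1/2})^{1/2} A^{1/2}` of two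
positive definite matrices; the midpoint of the geodesic joining them on the
positive definite manifold. -/
noncomputable def geomMean {n : ℕ} (A M : Matrix (Fin n) (Fin n) ℝ) :
    Matrix (Fin n) (Fin n) ℝ :=
  msqrt A * msqrt (msqrt A⁻¹ * M * msqrt A⁻¹) * msqrt A

open scoped MatrixOrder in
lemma msqrt_eq_cfcSqrt {n : ℕ} {A : Matrix (Fin n) (Fin n) ℝ} (h : A.PosSemidef) :
    msqrt A = CFC.sqrt A := by
  simp only [msqrt]
  rw [dif_pos h, CFC.sqrt_eq_cfc, cfc_nnreal_eq_real _ A, h.1.cfc_eq, IsHermitian.cfc,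
    Unitary.conjStarAlgAut_apply]
  congr 3
  funext i
  simp [max_eq_left (h.eigenvalues_nonneg i)]

/-- Replacement for the removed Mathlib `PosSemidef.sqrt`. -/
noncomputable def Matrix.PosSemidef.sqrt {n : ℕ} {A : Matrix (Fin n) (Fin n) ℝ}
    (_h : A.PosSemidef) : Matrix (Fin n) (Fin n) ℝ := msqrt A

open scoped MatrixOrder in
lemma Matrix.PosSemidef.posSemidef_sqrt {n : ℕ} {A : Matrix (Fin n) (Fin n) ℝ}
    (h : A.PosSemidef) : h.sqrt.PosSemidef := by
  rw [Matrix.PosSemidef.sqrt, msqrt_eq_cfcSqrt h]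
  exact (CFC.sqrt_nonneg A).posSemidef

open scoped MatrixOrder in
lemma Matrix.PosSemidef.sqrt_mul_self {n : ℕ} {A : Matrix (Fin n) (Fin n) ℝ}
    (h : A.PosSemidef) : h.sqrt * h.sqrt = A := by
  rw [Matrix.PosSemidef.sqrt, msqrt_eq_cfcSqrt h]
  exact CFC.sqrt_mul_sqrt_self A h.nonneg

open scoped MatrixOrder in
lemma Matrix.PosSemidef.eq_sqrt_of_sq_eq {n : ℕ} {Q P : Matrix (Fin n) (Fin n) ℝ}
    (hQ : Q.PosSemidef) (hP : P.PosSemidef) (hQP : Q ^ 2 = P) : Q = hP.sqrt := by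
  rw [Matrix.PosSemidef.sqrt, msqrt_eq_cfcSqrt hP, ← hQP, CFC.sqrt_sq Q hQ.nonneg]

lemma trace_pos_of_psd_ne {n : ℕ} {P : Matrix (Fin n) (Fin n) ℝ}
    (hP : P.PosSemidef) (hne : P ≠ 0) : 0 < P.trace := by
  set Q := hP.sqrt with hQdef
  have hQ := hP.posSemidef_sqrt
  have hsq : Q * Q = P := hP.sqrt_mul_self
  have hsym : ∀ i j, Q j i = Q i j := by
    intro i j
    have := congrFun (congrFun hQ.1 i) j
    simpa [Matrix.conjTranspose_apply] using this
  have htr : P.trace = ∑ i, ∑ j, Q i j ^ 2 := by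
    rw [← hsq]
    simp only [Matrix.trace, Matrix.diag, Matrix.mul_apply, sq]
    exact Finset.sum_congr rfl fun i _ => Finset.sum_congr rfl fun j _ => by rw [hsym i j]
  have hQ0 : Q ≠ 0 := fun h => hne (by rw [← hsq, h, mul_zero])
  obtain ⟨i, j, hij⟩ : ∃ i j, Q i j ≠ 0 := by
    by_contra h
    push_neg at h
    exact hQ0 (Matrix.ext fun i j => by simp [h i j])
  rw [htr]
  refine Finset.sum_pos' (fun i _ => Finset.sum_nonneg fun j _ => sq_nonneg _)
    ⟨i, Finset.mem_univ i, Finset.sum_pos' (fun j _ => sq_nonneg _)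
      ⟨j, Finset.mem_univ j, lt_of_le_of_ne (sq_nonneg _) (Ne.symm (pow_ne_zero 2 hij))⟩⟩

lemma trace_nonneg_of_psd {n : ℕ} {P : Matrix (Fin n) (Fin n) ℝ}
    (hP : P.PosSemidef) : 0 ≤ P.trace := by
  rcases eq_or_ne P 0 with rfl | h
  · simp
  · exact (trace_pos_of_psd_ne hP h).le

lemma trace_mul_pos {n : ℕ} {A P : Matrix (Fin n) (Fin n) ℝ}
    (hA : A.PosDef) (hP : P.PosSemidef) (hne : P ≠ 0) : 0 < (A * P).trace := by
  set L := hA.posSemidef.sqrt with hLdef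
  have hL := hA.posSemidef.posSemidef_sqrt
  have hsq : L * L = A := hA.posSemidef.sqrt_mul_self
  have hdet : L.det ≠ 0 := by
    intro h
    have : L.det * L.det = A.det := by rw [← det_mul, hsq]
    rw [h, mul_zero] at this
    exact hA.det_pos.ne' this.symm
  have hLH : Lᴴ = L := hL.1
  have hLPL : (L * P * L).PosSemidef := by
    have := hP.mul_mul_conjTranspose_same L
    rwa [hLH] at this
  have hLne : L * P * L ≠ 0 := by
    intro h
    apply hne
    have h1 : L⁻¹ * L = 1 := nonsing_inv_mul _ (Ne.isUnit hdet)
    have h2 : L * L⁻¹ = 1 := mul_nonsing_inv _ (Ne.isUnit hdet)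
    calc P = (L⁻¹ * L) * P * (L * L⁻¹) := by rw [h1, h2, one_mul, mul_one]
    _ = L⁻¹ * (L * P * L) * L⁻¹ := by noncomm_ring
    _ = 0 := by rw [h, mul_zero, zero_mul]
  have := trace_pos_of_psd_ne hLPL hLne
  rwa [show L * P * L = L * (P * L) by rw [mul_assoc], trace_mul_comm, mul_assoc, hsq,
    trace_mul_comm] at this

lemma trace_mul_nonneg' {n : ℕ} {A P : Matrix (Fin n) (Fin n) ℝ}
    (hA : A.PosDef) (hP : P.PosSemidef) : 0 ≤ (A * P).trace := by
  rcases eq_or_ne P 0 with rfl | h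
  · simp
  · exact (trace_mul_pos hA hP h).le

lemma msqrt_eq {n : ℕ} {X : Matrix (Fin n) (Fin n) ℝ} (hX : X.PosSemidef) :
    msqrt X = hX.sqrt := by
  rfl

/-- Strict geodesic midpoint convexity of `f(B) = tr(A B) + tr(M B⁻¹)` on the
positive definite manifold, where the geodesic midpoint of `B0` and `B1` is their
geometric mean. -/
theorem stmt_6 {n : ℕ} (A M : Matrix (Fin n) (Fin n) ℝ)
    (hA : A.PosDef) (hM : M.PosDef) :
    ∀ B0 B1 : Matrix (Fin n) (Fin n) ℝ, B0.PosDef → B1.PosDef → B0 ≠ B1 →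
      (A * geomMean B0 B1).trace + (M * (geomMean B0 B1)⁻¹).trace <
        (1 / 2 : ℝ) * ((A * B0).trace + (M * B0⁻¹).trace) +
        (1 / 2 : ℝ) * ((A * B1).trace + (M * B1⁻¹).trace) := by
  intro B0 B1 hB0 hB1 hne
  set S := hB0.posSemidef.sqrt with hSdef
  have hSpsd : S.PosSemidef := hB0.posSemidef.posSemidef_sqrt
  have hSsq : S * S = B0 := hB0.posSemidef.sqrt_mul_self
  have hSH : Sᴴ = S := hSpsd.1
  have hdetS : IsUnit S.det := by
    refine Ne.isUnit fun h => ?_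
    have : S.det * S.det = B0.det := by rw [← det_mul, hSsq]
    rw [h, mul_zero] at this
    exact hB0.det_pos.ne' this.symm
  have hSi : S⁻¹ * S = 1 := nonsing_inv_mul _ hdetS
  have hSi' : S * S⁻¹ = 1 := mul_nonsing_inv _ hdetS
  have hSinv_psd : (S⁻¹).PosSemidef := hSpsd.inv
  have hSiH : (S⁻¹)ᴴ = S⁻¹ := hSinv_psd.1
  -- msqrt facts
  have hmsB0 : msqrt B0 = S := msqrt_eq hB0.posSemidef
  have hmsB0i : msqrt B0⁻¹ = S⁻¹ := by
    have h2 : (S⁻¹) ^ 2 = B0⁻¹ := by rw [sq, ← Matrix.mul_inv_rev, hSsq]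
    rw [msqrt_eq hB0.inv.posSemidef, ← hSinv_psd.eq_sqrt_of_sq_eq hB0.inv.posSemidef h2]
  have hCpsd : (S⁻¹ * B1 * S⁻¹).PosSemidef := by
    have := hB1.posSemidef.mul_mul_conjTranspose_same S⁻¹
    rwa [hSiH] at this
  set R := hCpsd.sqrt with hRdef
  have hRpsd : R.PosSemidef := hCpsd.posSemidef_sqrt
  have hRsq : R * R = S⁻¹ * B1 * S⁻¹ := hCpsd.sqrt_mul_self
  have hRH : Rᴴ = R := hRpsd.1
  have hRiH : (R⁻¹)ᴴ = R⁻¹ := hRpsd.inv.1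
  have hG : geomMean B0 B1 = S * R * S := by
    rw [geomMean, hmsB0, hmsB0i, msqrt_eq hCpsd]
  have hB1eq : B1 = S * (R * R) * S := by
    rw [hRsq]
    calc B1 = (S * S⁻¹) * B1 * (S⁻¹ * S) := by rw [hSi', hSi, one_mul, mul_one]
    _ = S * (S⁻¹ * B1 * S⁻¹) * S := by noncomm_ring
  have hGinv : (S * R * S)⁻¹ = S⁻¹ * (R⁻¹ * S⁻¹) := by
    rw [Matrix.mul_inv_rev, Matrix.mul_inv_rev]
  have hB0inv : B0⁻¹ = S⁻¹ * S⁻¹ := by rw [← hSsq, Matrix.mul_inv_rev]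
  have hB1inv : B1⁻¹ = S⁻¹ * (R⁻¹ * (R⁻¹ * S⁻¹)) := by
    rw [hB1eq, Matrix.mul_inv_rev, Matrix.mul_inv_rev, Matrix.mul_inv_rev, mul_assoc]
  -- first deficiency matrix
  have hct : (S * (R - 1))ᴴ = (R - 1) * S := by
    rw [conjTranspose_mul, conjTranspose_sub, hRH, conjTranspose_one, hSH]
  have hEeq : B0 + B1 - (S * R * S + S * R * S) = (S * (R - 1)) * (S * (R - 1))ᴴ := by
    rw [hct]
    nth_rewrite 1 [← hSsq]
    nth_rewrite 1 [hB1eq]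
    noncomm_ring
  have hEpsd : (B0 + B1 - (S * R * S + S * R * S)).PosSemidef := by
    rw [hEeq]; exact posSemidef_self_mul_conjTranspose _
  have hEne : B0 + B1 - (S * R * S + S * R * S) ≠ 0 := by
    rw [hEeq]
    intro h
    have hT : S * (R - 1) = 0 := self_mul_conjTranspose_eq_zero.mp h
    have hR1 : R - 1 = 0 := by
      have : S⁻¹ * (S * (R - 1)) = S⁻¹ * 0 := by rw [hT]
      rwa [← mul_assoc, hSi, one_mul, mul_zero] at this
    have : R = 1 := by rwa [sub_eq_zero] at hR1
    apply hne
    rw [hB1eq, this, one_mul, mul_one, hSsq]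
  -- second deficiency matrix
  have hct' : (S⁻¹ * (R⁻¹ - 1))ᴴ = (R⁻¹ - 1) * S⁻¹ := by
    rw [conjTranspose_mul, conjTranspose_sub, hRiH, conjTranspose_one, hSiH]
  have hE'eq : B0⁻¹ + B1⁻¹ - ((S * R * S)⁻¹ + (S * R * S)⁻¹)
      = (S⁻¹ * (R⁻¹ - 1)) * (S⁻¹ * (R⁻¹ - 1))ᴴ := by
    rw [hct', hGinv, hB0inv, hB1inv]
    noncomm_ring
  have hE'psd : (B0⁻¹ + B1⁻¹ - ((S * R * S)⁻¹ + (S * R * S)⁻¹)).PosSemidef := by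
    rw [hE'eq]; exact posSemidef_self_mul_conjTranspose _
  have h1 : 0 < (A * (B0 + B1 - (S * R * S + S * R * S))).trace :=
    trace_mul_pos hA hEpsd hEne
  have h2 : 0 ≤ (M * (B0⁻¹ + B1⁻¹ - ((S * R * S)⁻¹ + (S * R * S)⁻¹))).trace :=
    trace_mul_nonneg' hM hE'psd
  rw [hG]
  simp only [Matrix.mul_add, Matrix.mul_sub, trace_add, trace_sub] at h1 h2
  linarith
end

section
/- Let Φ be a real m×n matrix, and let H and H0 be real symmetric positive definite n×n matrices such that Σ0 := Φ H0 Φᵀ and Σ := Φ H Φᵀ are positive definite (hence invertible). Then Σ0⁻¹ Φ H0 H⁻¹ H0 Φᵀ Σ0⁻¹ ≽ Σ⁻¹ in the Loewner order, i.e., Σ0⁻¹ Φ H0 H⁻¹ H0 Φᵀ Σ0⁻¹ − (Φ H Φᵀ)⁻¹ is positive semidefinite. -/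
open Matrix

set_option maxHeartbeats 1000000

/-- Schur-complement operator inequality underlying the spatial surrogate:
`A0⁻¹ Φ H0 H⁻¹ H0 Φᵀ A0⁻¹ ≽ (Φ H Φᵀ)⁻¹` in the Loewner order, where
`A0 = Φ H0 Φᵀ` and `Σ = Φ H Φᵀ`. -/
theorem stmt_8 {m n : ℕ} (Φ : Matrix (Fin m) (Fin n) ℝ)
    (H H0 : Matrix (Fin n) (Fin n) ℝ) (hH : H.PosDef) (hH0 : H0.PosDef)
    (hS0 : (Φ * H0 * Φᵀ).PosDef) (hS : (Φ * H * Φᵀ).PosDef) :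
    ((Φ * H0 * Φᵀ)⁻¹ * Φ * H0 * H⁻¹ * H0 * Φᵀ * (Φ * H0 * Φᵀ)⁻¹
      - (Φ * H * Φᵀ)⁻¹).PosSemidef := by
  set A0 : Matrix (Fin m) (Fin m) ℝ := Φ * H0 * Φᵀ with hA0
  set A : Matrix (Fin m) (Fin m) ℝ := Φ * H * Φᵀ with hA
  have hS0u : IsUnit A0.det := isUnit_iff_ne_zero.mpr hS0.det_pos.ne'
  have hSu : IsUnit A.det := isUnit_iff_ne_zero.mpr hS.det_pos.ne'
  have hHu : IsUnit H.det := isUnit_iff_ne_zero.mpr hH.det_pos.ne'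
  -- symmetry facts (over ℝ conjTranspose = transpose)
  have hHsym : Hᵀ = H := hH.isHermitian.eq
  have hH0sym : H0ᵀ = H0 := hH0.isHermitian.eq
  have hHisym : (H⁻¹)ᵀ = H⁻¹ := hH.isHermitian.inv.eq
  have hS0isym : (A0⁻¹)ᵀ = A0⁻¹ := hS0.isHermitian.inv.eq
  have hSisym : (A⁻¹)ᵀ = A⁻¹ := hS.isHermitian.inv.eq
  -- square root of H
  set S : Matrix (Fin n) (Fin n) ℝ := (open scoped MatrixOrder in CFC.sqrt H) with hSdef
  have hSsym : Sᵀ = S := (open scoped MatrixOrder in (CFC.sqrt_nonneg H).posSemidef.isHermitian.eq)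
  have hSS : S * S = H := (open scoped MatrixOrder in CFC.sqrt_mul_sqrt_self H hH.posSemidef.nonneg)
  set X : Matrix (Fin n) (Fin m) ℝ := H⁻¹ * H0 * Φᵀ * A0⁻¹ with hX
  set Y : Matrix (Fin n) (Fin m) ℝ := Φᵀ * A⁻¹ with hY
  have key : A0⁻¹ * Φ * H0 * H⁻¹ * H0 * Φᵀ * A0⁻¹ - A⁻¹
      = (S * (X - Y))ᴴ * (S * (X - Y)) := by
    have hconj : (S * (X - Y))ᴴ = (X - Y)ᵀ * S := by
      rw [conjTranspose_eq_transpose_of_trivial, transpose_mul, hSsym]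
    rw [hconj]
    have expand : (X - Y)ᵀ * S * (S * (X - Y))
        = Xᵀ * H * X - Xᵀ * H * Y - Yᵀ * H * X + Yᵀ * H * Y := by
      have h1 : (X - Y)ᵀ * S * (S * (X - Y)) = (X - Y)ᵀ * (S * S) * (X - Y) := by
        simp only [Matrix.mul_assoc]
      rw [h1, hSS, transpose_sub]
      simp only [Matrix.sub_mul, Matrix.mul_sub]
      abel
    rw [expand]
    have hXT : Xᵀ = A0⁻¹ * Φ * H0 * H⁻¹ := by
      simp only [hX, transpose_mul, hHisym, hH0sym, hS0isym, transpose_transpose,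
        Matrix.mul_assoc]
    have hYT : Yᵀ = A⁻¹ * Φ := by
      simp only [hY, transpose_mul, hSisym, transpose_transpose]
    have hHiH : H⁻¹ * H = 1 := nonsing_inv_mul _ hHu
    have hHHi : H * H⁻¹ = 1 := mul_nonsing_inv _ hHu
    have e1 : Xᵀ * H * X = A0⁻¹ * Φ * H0 * H⁻¹ * H0 * Φᵀ * A0⁻¹ := by
      rw [hXT, hX]
      calc A0⁻¹ * Φ * H0 * H⁻¹ * H * (H⁻¹ * H0 * Φᵀ * A0⁻¹)
          = A0⁻¹ * Φ * H0 * (H⁻¹ * H * H⁻¹) * H0 * Φᵀ * A0⁻¹ := by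
            simp only [Matrix.mul_assoc]
        _ = A0⁻¹ * Φ * H0 * H⁻¹ * H0 * Φᵀ * A0⁻¹ := by
            rw [hHiH, Matrix.one_mul]
    have e2 : Xᵀ * H * Y = A⁻¹ := by
      rw [hXT, hY]
      calc A0⁻¹ * Φ * H0 * H⁻¹ * H * (Φᵀ * A⁻¹)
          = A0⁻¹ * (Φ * H0 * Φᵀ) * A⁻¹ := by
            rw [show A0⁻¹ * Φ * H0 * H⁻¹ * H = A0⁻¹ * (Φ * H0) * (H⁻¹ * H) by
              simp only [Matrix.mul_assoc]]
            rw [hHiH, Matrix.mul_one]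
            simp only [Matrix.mul_assoc]
        _ = A⁻¹ := by rw [← hA0, nonsing_inv_mul _ hS0u, Matrix.one_mul]
    have e3 : Yᵀ * H * X = A⁻¹ := by
      rw [hYT, hX]
      calc A⁻¹ * Φ * H * (H⁻¹ * H0 * Φᵀ * A0⁻¹)
          = A⁻¹ * Φ * (H * H⁻¹) * H0 * Φᵀ * A0⁻¹ := by
            simp only [Matrix.mul_assoc]
        _ = A⁻¹ * (Φ * H0 * Φᵀ) * A0⁻¹ := by
            rw [hHHi, Matrix.mul_one]; simp only [Matrix.mul_assoc]
        _ = A⁻¹ := by rw [← hA0, Matrix.mul_assoc, mul_nonsing_inv _ hS0u,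
            Matrix.mul_one]
    have e4 : Yᵀ * H * Y = A⁻¹ := by
      rw [hYT, hY]
      calc A⁻¹ * Φ * H * (Φᵀ * A⁻¹)
          = A⁻¹ * (Φ * H * Φᵀ) * A⁻¹ := by simp only [Matrix.mul_assoc]
        _ = A⁻¹ := by rw [← hA, Matrix.mul_assoc, mul_nonsing_inv _ hSu,
            Matrix.mul_one]
    rw [e1, e2, e3, e4]
    abel
  rw [key]
  exact posSemidef_conjTranspose_mul_self _
end

section
/- Let Φ be a real m×n matrix, let H and H0 be real symmetric positive definite n×n matrices such that Σ0 := Φ H0 Φᵀ and Σ := Φ H Φᵀ are positive definite, and let M be a real symmetric positive semidefinite m×m matrix. Then trace(M Σ⁻¹) ≤ trace(H0 Φᵀ Σ0⁻¹ M Σ0⁻¹ Φ H0 H⁻¹), with equality when H = H0. Consequently, the function H ↦ trace(Φᵀ Σ0⁻¹ Φ H) + trace((H0 Φᵀ Σ0⁻¹ M Σ0⁻¹ Φ H0) H⁻¹) majorizes, up to an additive constant, the spatial cost H ↦ log det(Φ H Φᵀ) + trace(M (Φ H Φᵀ)⁻¹), and the two coincide at H = H0. -/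
open Matrix
open scoped MatrixOrder

section Aux
variable {k : ℕ}

lemma myTraceNonneg {A : Matrix (Fin k) (Fin k) ℝ} (hA : A.PosSemidef) : 0 ≤ A.trace := by
  rw [Matrix.trace]
  refine Finset.sum_nonneg fun i _ => ?_
  have := hA.dotProduct_mulVec_nonneg (Pi.single i 1)
  simpa [Matrix.mulVec_single, dotProduct, Pi.single_apply, Finset.sum_ite_eq] using this

lemma myTraceMulNonneg {A B : Matrix (Fin k) (Fin k) ℝ} (hA : A.PosSemidef) (hB : B.PosSemidef) :
    0 ≤ (A * B).trace := by
  have h1 : (CFC.sqrt A * B * CFC.sqrt A).PosSemidef := by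
    have := hB.mul_mul_conjTranspose_same (CFC.sqrt A)
    rwa [(CFC.sqrt_nonneg A).posSemidef.1] at this
  have h2 : (A * B).trace = (CFC.sqrt A * B * CFC.sqrt A).trace := by
    rw [Matrix.trace_mul_cycle, CFC.sqrt_mul_sqrt_self A hA.nonneg]
  rw [h2]
  exact myTraceNonneg h1

lemma myTraceEqSumEig {A : Matrix (Fin k) (Fin k) ℝ} (hA : A.IsHermitian) :
    A.trace = ∑ i, hA.eigenvalues i := by
  simpa using hA.trace_eq_sum_eigenvalues
end Aux

section Aux2
variable {k : ℕ}

lemma myPosDefConj {A B : Matrix (Fin k) (Fin k) ℝ} (hA : A.PosDef) (hB : IsUnit B.det) :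
    (Bᵀ * A * B).PosDef := by
  have hpsd : (Bᵀ * A * B).PosSemidef := by
    have := hA.posSemidef.conjTranspose_mul_mul_same B
    rwa [Matrix.conjTranspose_eq_transpose_of_trivial] at this
  refine Matrix.PosDef.of_dotProduct_mulVec_pos hpsd.1 fun ⦃x⦄ hx => ?_
  have hinj := Matrix.mulVec_injective_iff_isUnit.mpr ((Matrix.isUnit_iff_isUnit_det B).2 hB)
  have hBx : B *ᵥ x ≠ 0 := by
    intro h
    exact hx (hinj (h.trans (Matrix.mulVec_zero B).symm))
  have key : star x ⬝ᵥ (Bᵀ * A * B) *ᵥ x = star (B *ᵥ x) ⬝ᵥ A *ᵥ (B *ᵥ x) := by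
    rw [← Matrix.mulVec_mulVec, ← Matrix.mulVec_mulVec, star_trivial, star_trivial,
      dotProduct_mulVec, Matrix.vecMul_transpose]
  rw [key]
  exact hA.dotProduct_mulVec_pos hBx

lemma myLogDetLe {C : Matrix (Fin k) (Fin k) ℝ} (hC : C.PosDef) :
    Real.log C.det ≤ C.trace - k := by
  have hdet : C.det = ∏ i, hC.isHermitian.eigenvalues i := by
    simpa using hC.isHermitian.det_eq_prod_eigenvalues
  have htr := myTraceEqSumEig hC.isHermitian
  rw [hdet, htr, Real.log_prod (fun i _ => (hC.eigenvalues_pos i).ne')]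
  calc ∑ i, Real.log (hC.isHermitian.eigenvalues i)
      ≤ ∑ i, (hC.isHermitian.eigenvalues i - 1) :=
        Finset.sum_le_sum fun i _ => Real.log_le_sub_one_of_pos (hC.eigenvalues_pos i)
    _ = (∑ i, hC.isHermitian.eigenvalues i) - k := by
        rw [Finset.sum_sub_distrib]
        simp

lemma myLogDetIneq {A B : Matrix (Fin k) (Fin k) ℝ} (hA : A.PosDef) (hB : B.PosDef) :
    Real.log A.det ≤ Real.log B.det + (B⁻¹ * A).trace - k := by
  have hBi : B⁻¹.PosDef := hB.inv
  set R := CFC.sqrt B⁻¹ with hRdef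
  have hRR : R * R = B⁻¹ := CFC.sqrt_mul_sqrt_self _ hBi.posSemidef.nonneg
  have hRherm : Rᵀ = R := by
    rw [← Matrix.conjTranspose_eq_transpose_of_trivial]
    exact (CFC.sqrt_nonneg B⁻¹).posSemidef.1
  have hRdet : IsUnit R.det := by
    have h2 : R.det * R.det = B⁻¹.det := by rw [← Matrix.det_mul, hRR]
    have : B⁻¹.det ≠ 0 := hBi.det_pos.ne'
    refine (mul_ne_zero_iff.mp (h2 ▸ this)).1.isUnit
  have hC : (Rᵀ * A * R).PosDef := myPosDefConj hA hRdet
  rw [hRherm] at hC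
  have h1 := myLogDetLe hC
  have hdetC : (R * A * R).det = B⁻¹.det * A.det := by
    rw [Matrix.det_mul, Matrix.det_mul, ← hRR, Matrix.det_mul]; ring
  have htrC : (R * A * R).trace = (B⁻¹ * A).trace := by
    rw [Matrix.trace_mul_cycle, hRR]
  have hBinvdet : B⁻¹.det = (B.det)⁻¹ := by
    rw [Matrix.det_nonsing_inv, Ring.inverse_eq_inv']
  rw [hdetC, htrC, hBinvdet,
    Real.log_mul (inv_ne_zero hB.det_pos.ne') hA.det_pos.ne', Real.log_inv] at h1
  linarith
end Aux2
/-- Convex bounding of the spatial part of the Type-II cost (Theorem 3 of the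
paper): with `Σ0 = Φ H0 Φᵀ` and `Σ = Φ H Φᵀ`, one has
`tr(M Σ⁻¹) ≤ tr(H0 Φᵀ Σ0⁻¹ M Σ0⁻¹ Φ H0 H⁻¹)` with equality at `H = H0`;
consequently the surrogate
`H ↦ tr(Φᵀ Σ0⁻¹ Φ H) + tr((H0 Φᵀ Σ0⁻¹ M Σ0⁻¹ Φ H0) H⁻¹)` majorizes, up to an
additive constant, the spatial cost `H ↦ log det Σ + tr(M Σ⁻¹)`, and the two
coincide at `H = H0`. -/
theorem stmt_9 {m n : ℕ} (Φ : Matrix (Fin m) (Fin n) ℝ)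
    (H0 : Matrix (Fin n) (Fin n) ℝ) (M : Matrix (Fin m) (Fin m) ℝ)
    (hH0 : H0.PosDef) (hM : M.PosSemidef) (hS0 : (Φ * H0 * Φᵀ).PosDef) :
    (∀ H : Matrix (Fin n) (Fin n) ℝ, H.PosDef → (Φ * H * Φᵀ).PosDef →
      (M * (Φ * H * Φᵀ)⁻¹).trace ≤
        ((H0 * Φᵀ * (Φ * H0 * Φᵀ)⁻¹ * M * (Φ * H0 * Φᵀ)⁻¹ * Φ * H0) * H⁻¹).trace) ∧
    (M * (Φ * H0 * Φᵀ)⁻¹).trace =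
      ((H0 * Φᵀ * (Φ * H0 * Φᵀ)⁻¹ * M * (Φ * H0 * Φᵀ)⁻¹ * Φ * H0) * H0⁻¹).trace ∧
    ∃ c : ℝ,
      (∀ H : Matrix (Fin n) (Fin n) ℝ, H.PosDef → (Φ * H * Φᵀ).PosDef →
        Real.log (Φ * H * Φᵀ).det + (M * (Φ * H * Φᵀ)⁻¹).trace ≤
          (Φᵀ * (Φ * H0 * Φᵀ)⁻¹ * Φ * H).trace +
          ((H0 * Φᵀ * (Φ * H0 * Φᵀ)⁻¹ * M * (Φ * H0 * Φᵀ)⁻¹ * Φ * H0) * H⁻¹).trace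
          + c) ∧
      Real.log (Φ * H0 * Φᵀ).det + (M * (Φ * H0 * Φᵀ)⁻¹).trace =
        (Φᵀ * (Φ * H0 * Φᵀ)⁻¹ * Φ * H0).trace +
        ((H0 * Φᵀ * (Φ * H0 * Φᵀ)⁻¹ * M * (Φ * H0 * Φᵀ)⁻¹ * Φ * H0) * H0⁻¹).trace
        + c := by
  set S0m : Matrix (Fin m) (Fin m) ℝ := Φ * H0 * Φᵀ with hS0m
  have hS0' : S0m.PosDef := by rw [hS0m]; exact hS0
  have hS0det : IsUnit S0m.det := isUnit_iff_ne_zero.mpr hS0'.det_pos.ne'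
  have hH0det : IsUnit H0.det := isUnit_iff_ne_zero.mpr hH0.det_pos.ne'
  have hH0t : H0ᵀ = H0 := by
    rw [← Matrix.conjTranspose_eq_transpose_of_trivial]; exact hH0.1
  have hS0it : (S0m⁻¹)ᵀ = S0m⁻¹ := by
    rw [← Matrix.conjTranspose_eq_transpose_of_trivial]; exact hS0'.inv.1
  have cH0S0 : ∀ X : Matrix (Fin m) (Fin m) ℝ,
      Φ * (H0 * (Φᵀ * X)) = S0m * X := fun X => by rw [hS0m]; simp only [Matrix.mul_assoc]
  have cS0 : ∀ X : Matrix (Fin m) (Fin m) ℝ, S0m⁻¹ * (S0m * X) = X :=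
    fun X => Matrix.nonsing_inv_mul_cancel_left _ _ hS0det
  have cS0inv : S0m * S0m⁻¹ = 1 := Matrix.mul_nonsing_inv _ hS0det
  -- Part 1
  have key : ∀ H : Matrix (Fin n) (Fin n) ℝ, H.PosDef → (Φ * H * Φᵀ).PosDef →
      (M * (Φ * H * Φᵀ)⁻¹).trace ≤
        ((H0 * Φᵀ * S0m⁻¹ * M * S0m⁻¹ * Φ * H0) * H⁻¹).trace := by
    intro H hH hS
    set Sm : Matrix (Fin m) (Fin m) ℝ := Φ * H * Φᵀ with hSm
    have hS' : Sm.PosDef := by rw [hSm]; exact hS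
    have hHdet : IsUnit H.det := isUnit_iff_ne_zero.mpr hH.det_pos.ne'
    have hSdet : IsUnit Sm.det := isUnit_iff_ne_zero.mpr hS'.det_pos.ne'
    have hHt : Hᵀ = H := by
      rw [← Matrix.conjTranspose_eq_transpose_of_trivial]; exact hH.1
    have hSit : (Sm⁻¹)ᵀ = Sm⁻¹ := by
      rw [← Matrix.conjTranspose_eq_transpose_of_trivial]; exact hS'.inv.1
    have cHS : ∀ X : Matrix (Fin m) (Fin m) ℝ,
        Φ * (H * (Φᵀ * X)) = Sm * X := fun X => by rw [hSm]; simp only [Matrix.mul_assoc]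
    have cH : ∀ X : Matrix (Fin n) (Fin m) ℝ, H⁻¹ * (H * X) = X :=
      fun X => Matrix.nonsing_inv_mul_cancel_left _ _ hHdet
    have cH' : ∀ X : Matrix (Fin n) (Fin m) ℝ, H * (H⁻¹ * X) = X :=
      fun X => Matrix.mul_nonsing_inv_cancel_left _ _ hHdet
    have cSinv : Sm * Sm⁻¹ = 1 := Matrix.mul_nonsing_inv _ hSdet
    set E : Matrix (Fin n) (Fin m) ℝ := H0 * Φᵀ * S0m⁻¹ - H * Φᵀ * Sm⁻¹ with hE
    have hEt : Eᵀ = S0m⁻¹ * (Φ * H0) - Sm⁻¹ * (Φ * H) := by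
      rw [hE]
      simp only [Matrix.transpose_sub, Matrix.transpose_mul, Matrix.transpose_transpose,
        hH0t, hHt, hS0it, hSit]
    have hPSD : (Eᵀ * H⁻¹ * E).PosSemidef := by
      have := hH.inv.posSemidef.conjTranspose_mul_mul_same E
      rwa [Matrix.conjTranspose_eq_transpose_of_trivial] at this
    have hID : Eᵀ * H⁻¹ * E =
        S0m⁻¹ * Φ * H0 * H⁻¹ * H0 * Φᵀ * S0m⁻¹ - Sm⁻¹ := by
      rw [hEt, hE]
      simp only [Matrix.sub_mul, Matrix.mul_sub, Matrix.mul_assoc]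
      simp only [cH, cH', cH0S0, cHS, cS0, cS0inv, cSinv, Matrix.mul_one]
      abel
    have hPSD' : (S0m⁻¹ * Φ * H0 * H⁻¹ * H0 * Φᵀ * S0m⁻¹ - Sm⁻¹).PosSemidef :=
      hID ▸ hPSD
    have h0 := myTraceMulNonneg hM hPSD'
    rw [Matrix.mul_sub, Matrix.trace_sub] at h0
    have htr : (M * (S0m⁻¹ * Φ * H0 * H⁻¹ * H0 * Φᵀ * S0m⁻¹)).trace =
        ((H0 * Φᵀ * S0m⁻¹ * M * S0m⁻¹ * Φ * H0) * H⁻¹).trace := by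
      rw [show M * (S0m⁻¹ * Φ * H0 * H⁻¹ * H0 * Φᵀ * S0m⁻¹) =
          (M * (S0m⁻¹ * Φ * H0 * H⁻¹)) * (H0 * Φᵀ * S0m⁻¹) from by
            simp only [Matrix.mul_assoc],
        Matrix.trace_mul_comm,
        show (H0 * Φᵀ * S0m⁻¹) * (M * (S0m⁻¹ * Φ * H0 * H⁻¹)) =
          (H0 * Φᵀ * S0m⁻¹ * M * S0m⁻¹ * Φ * H0) * H⁻¹ from by
            simp only [Matrix.mul_assoc]]
    linarith
  -- Part 2
  have part2 : (M * S0m⁻¹).trace =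
      ((H0 * Φᵀ * S0m⁻¹ * M * S0m⁻¹ * Φ * H0) * H0⁻¹).trace := by
    conv_rhs => rw [Matrix.mul_nonsing_inv_cancel_right _ _ hH0det, Matrix.trace_mul_comm]
    congr 1
    rw [show Φ * (H0 * Φᵀ * S0m⁻¹ * M * S0m⁻¹) = S0m * (S0m⁻¹ * (M * S0m⁻¹)) from by
        rw [hS0m]; simp only [Matrix.mul_assoc],
      Matrix.mul_nonsing_inv_cancel_left _ _ hS0det]
  refine ⟨key, part2, Real.log S0m.det - m, ?_, ?_⟩
  · intro H hH hS
    have p1 := key H hH hS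
    set Sm : Matrix (Fin m) (Fin m) ℝ := Φ * H * Φᵀ with hSm
    have hS' : Sm.PosDef := by rw [hSm]; exact hS
    have lg := myLogDetIneq hS' hS0'
    have htrS : (S0m⁻¹ * Sm).trace = (Φᵀ * S0m⁻¹ * Φ * H).trace := by
      rw [Matrix.trace_mul_comm,
        show Sm * S0m⁻¹ = (Φ * H) * (Φᵀ * S0m⁻¹) from by
          rw [hSm]; simp only [Matrix.mul_assoc],
        Matrix.trace_mul_comm,
        show (Φᵀ * S0m⁻¹) * (Φ * H) = Φᵀ * S0m⁻¹ * Φ * H from by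
          simp only [Matrix.mul_assoc]]
    rw [htrS] at lg
    linarith
  · have htr1 : (Φᵀ * S0m⁻¹ * Φ * H0).trace = (m : ℝ) := by
      rw [show Φᵀ * S0m⁻¹ * Φ * H0 = (Φᵀ * S0m⁻¹) * (Φ * H0) from by
          simp only [Matrix.mul_assoc],
        Matrix.trace_mul_comm,
        show (Φ * H0) * (Φᵀ * S0m⁻¹) = S0m * S0m⁻¹ from by
          rw [hS0m]; simp only [Matrix.mul_assoc],
        cS0inv, Matrix.trace_one]
      simp
    linarith [part2, htr1]
end

section
/- Let Q be a complex T×L matrix, let P and P0 be diagonal L×L matrices with strictly positive real diagonal entries, and suppose that B := Q P Q^H and B0 := Q P0 Q^H are Hermitian positive definite T×T matrices (hence invertible), where Q^H denotes the conjugate transpose. Then for every Hermitian positive semidefinite T×T matrix M, trace(M B⁻¹) ≤ trace(P0 Q^H B0⁻¹ M B0⁻¹ Q P0 P⁻¹). -/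
open Matrix
open scoped ComplexOrder

lemma aux_trace_nonneg {n : Type*} [Fintype n] {W : Matrix n n ℂ}
    (hW : W.PosSemidef) : 0 ≤ W.trace := by
  exact hW.trace_nonneg

lemma aux_trace_mul_nonneg {n : Type*} [Fintype n] [DecidableEq n] {W D : Matrix n n ℂ}
    (hW : W.PosSemidef) (hD : D.PosSemidef) : 0 ≤ (W * D).trace := by
  open scoped MatrixOrder in
  have h2 : (CFC.sqrt W * D * CFC.sqrt W).PosSemidef := by
    have := hD.mul_mul_conjTranspose_same (CFC.sqrt W)
    rwa [(CFC.sqrt_nonneg W).posSemidef.isHermitian.eq] at this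
  open scoped MatrixOrder in
  have h3 : (CFC.sqrt W * D * CFC.sqrt W).trace = (W * D).trace := by
    rw [trace_mul_cycle, CFC.sqrt_mul_sqrt_self W hW.nonneg]
  exact h3 ▸ aux_trace_nonneg h2

lemma aux_proj {T L : ℕ} (A : Matrix (Fin T) (Fin L) ℂ)
    (h : (A * Aᴴ).PosDef) :
    (1 - Aᴴ * (A * Aᴴ)⁻¹ * A).PosSemidef := by
  haveI := h.isUnit.invertible
  set R := Aᴴ * (A * Aᴴ)⁻¹ * A with hRdef
  have hRH : Rᴴ = R := by
    simp [hRdef, conjTranspose_mul, Matrix.mul_assoc, h.inv.isHermitian.eq]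
  have hRR : R * R = R := by
    rw [hRdef]
    calc Aᴴ * (A * Aᴴ)⁻¹ * A * (Aᴴ * (A * Aᴴ)⁻¹ * A)
        = Aᴴ * ((A * Aᴴ)⁻¹ * ((A * Aᴴ) * ((A * Aᴴ)⁻¹ * A))) := by
          simp only [Matrix.mul_assoc]
      _ = Aᴴ * (A * Aᴴ)⁻¹ * A := by
          rw [Matrix.inv_mul_cancel_left_of_invertible]
          simp only [Matrix.mul_assoc]
  have key : (1 - R)ᴴ * (1 - R) = 1 - R := by
    rw [conjTranspose_sub, conjTranspose_one, hRH]
    simp only [sub_mul, mul_sub, Matrix.one_mul, Matrix.mul_one, hRR]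
    abel
  rw [← key]
  exact posSemidef_conjTranspose_mul_self _

/-- Schur-complement majorization step for the Toeplitz/circulant temporal update
(thin Dugh, Theorem 7 of the paper): with `B = Q P Qᴴ` and `B0 = Q P0 Qᴴ`
Hermitian positive definite, `P, P0` diagonal with strictly positive real entries,
and `M` Hermitian positive semidefinite,
`tr(M B⁻¹) ≤ tr(P0 Qᴴ B0⁻¹ M B0⁻¹ Q P0 P⁻¹)`. -/
theorem stmt_16 {T L : ℕ} (Q : Matrix (Fin T) (Fin L) ℂ) (p p0 : Fin L → ℝ)
    (hp : ∀ l, 0 < p l) (hp0 : ∀ l, 0 < p0 l)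
    (hB : (Q * Matrix.diagonal (fun l => (p l : ℂ)) * Qᴴ).PosDef)
    (hB0 : (Q * Matrix.diagonal (fun l => (p0 l : ℂ)) * Qᴴ).PosDef)
    (M : Matrix (Fin T) (Fin T) ℂ) (hM : M.PosSemidef) :
    (M * (Q * Matrix.diagonal (fun l => (p l : ℂ)) * Qᴴ)⁻¹).trace ≤
      (Matrix.diagonal (fun l => (p0 l : ℂ)) * Qᴴ *
        (Q * Matrix.diagonal (fun l => (p0 l : ℂ)) * Qᴴ)⁻¹ * M *
        (Q * Matrix.diagonal (fun l => (p0 l : ℂ)) * Qᴴ)⁻¹ * Q *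
        Matrix.diagonal (fun l => (p0 l : ℂ)) *
        (Matrix.diagonal (fun l => (p l : ℂ)))⁻¹).trace := by
  set P : Matrix (Fin L) (Fin L) ℂ := Matrix.diagonal (fun l => (p l : ℂ)) with hPdef
  set P0 : Matrix (Fin L) (Fin L) ℂ := Matrix.diagonal (fun l => (p0 l : ℂ)) with hP0def
  set B : Matrix (Fin T) (Fin T) ℂ := Q * P * Qᴴ with hBdef
  set B0 : Matrix (Fin T) (Fin T) ℂ := Q * P0 * Qᴴ with hB0def
  set Psq : Matrix (Fin L) (Fin L) ℂ :=
    Matrix.diagonal (fun l => ((Real.sqrt (p l) : ℝ) : ℂ)) with hPsqdef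
  set Pis : Matrix (Fin L) (Fin L) ℂ :=
    Matrix.diagonal (fun l => (((Real.sqrt (p l))⁻¹ : ℝ) : ℂ)) with hPisdef
  have hsne : ∀ l, (Real.sqrt (p l)) ≠ 0 := fun l => (Real.sqrt_pos.mpr (hp l)).ne'
  have hPsqH : Psqᴴ = Psq := by
    simp [hPsqdef, diagonal_conjTranspose, Function.comp]
  have hPisH : Pisᴴ = Pis := by
    simp [hPisdef, diagonal_conjTranspose, Function.comp]
  have hP0H : P0ᴴ = P0 := by
    simp [hP0def, diagonal_conjTranspose, Function.comp]
  have dEq : ∀ (f g : Fin L → ℂ), (∀ l, f l = g l) →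
      Matrix.diagonal f = Matrix.diagonal g := fun f g h => congrArg _ (funext h)
  have hPsq2 : Psq * Psq = P := by
    rw [hPsqdef, hPdef, diagonal_mul_diagonal]
    exact dEq _ _ fun l => by
      rw [← Complex.ofReal_mul, Real.mul_self_sqrt (hp l).le]
  have hPisPsq : Pis * Psq = 1 := by
    rw [hPisdef, hPsqdef, diagonal_mul_diagonal, ← diagonal_one]
    exact dEq _ _ fun l => by
      rw [← Complex.ofReal_mul, inv_mul_cancel₀ (hsne l), Complex.ofReal_one]
  have hPsqPis : Psq * Pis = 1 := by
    rw [hPsqdef, hPisdef, diagonal_mul_diagonal, ← diagonal_one]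
    exact dEq _ _ fun l => by
      rw [← Complex.ofReal_mul, mul_inv_cancel₀ (hsne l), Complex.ofReal_one]
  have hPinv : P⁻¹ = Matrix.diagonal (fun l => ((p l : ℂ))⁻¹) := by
    refine Matrix.inv_eq_right_inv ?_
    rw [hPdef, diagonal_mul_diagonal, ← diagonal_one]
    exact dEq _ _ fun l =>
      mul_inv_cancel₀ (Complex.ofReal_ne_zero.mpr (hp l).ne')
  -- A and U
  set A : Matrix (Fin T) (Fin L) ℂ := Q * Psq with hAdef
  set U : Matrix (Fin T) (Fin L) ℂ := Q * (P0 * Pis) with hUdef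
  have hAAH : A * Aᴴ = B := by
    rw [hAdef, conjTranspose_mul, hPsqH, hBdef, ← hPsq2]
    simp only [Matrix.mul_assoc]
  have hUH : Uᴴ = (Pis * P0) * Qᴴ := by
    rw [hUdef, conjTranspose_mul, conjTranspose_mul, hPisH, hP0H]
  have hUA : U * Aᴴ = B0 := by
    rw [hAdef, conjTranspose_mul, hPsqH, hUdef, hB0def]
    calc Q * (P0 * Pis) * (Psq * Qᴴ) = Q * (P0 * (Pis * Psq) * Qᴴ) := by
          simp only [Matrix.mul_assoc]
      _ = Q * P0 * Qᴴ := by rw [hPisPsq, Matrix.mul_one, Matrix.mul_assoc]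
  have hAU : A * Uᴴ = B0 := by
    rw [hUH, hAdef, hB0def]
    calc Q * Psq * ((Pis * P0) * Qᴴ) = Q * ((Psq * Pis) * (P0 * Qᴴ)) := by
          simp only [Matrix.mul_assoc]
      _ = Q * P0 * Qᴴ := by rw [hPsqPis, Matrix.one_mul, Matrix.mul_assoc]
  have hUU : U * Uᴴ = Q * (P0 * (P⁻¹ * P0)) * Qᴴ := by
    rw [hUH, hUdef, hPinv]
    have hdiag : (P0 * Pis) * (Pis * P0)
        = P0 * (Matrix.diagonal (fun l => ((p l : ℂ))⁻¹) * P0) := by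
      rw [hP0def, hPisdef]
      simp only [diagonal_mul_diagonal]
      refine dEq _ _ fun l => ?_
      have key : (((Real.sqrt (p l))⁻¹ : ℝ) : ℂ) * (((Real.sqrt (p l))⁻¹ : ℝ) : ℂ)
          = ((p l : ℂ))⁻¹ := by
        rw [← Complex.ofReal_mul, ← mul_inv, Real.mul_self_sqrt (hp l).le,
          Complex.ofReal_inv]
      calc ((p0 l : ℂ)) * (((Real.sqrt (p l))⁻¹ : ℝ) : ℂ) *
            ((((Real.sqrt (p l))⁻¹ : ℝ) : ℂ) * (p0 l : ℂ))
          = ((((Real.sqrt (p l))⁻¹ : ℝ) : ℂ) * (((Real.sqrt (p l))⁻¹ : ℝ) : ℂ)) *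
            ((p0 l : ℂ) * (p0 l : ℂ)) := by ring
        _ = ((p l : ℂ))⁻¹ * ((p0 l : ℂ) * (p0 l : ℂ)) := by rw [key]
        _ = (p0 l : ℂ) * (((p l : ℂ))⁻¹ * (p0 l : ℂ)) := by ring
    calc Q * (P0 * Pis) * ((Pis * P0) * Qᴴ)
        = Q * ((P0 * Pis) * (Pis * P0)) * Qᴴ := by simp only [Matrix.mul_assoc]
      _ = _ := by rw [hdiag]
  have hBpd : (A * Aᴴ).PosDef := by rw [hAAH]; exact hB
  have hProj : (1 - Aᴴ * B⁻¹ * A).PosSemidef := by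
    have := aux_proj A hBpd
    rwa [hAAH] at this
  have hDel : (U * (1 - Aᴴ * B⁻¹ * A) * Uᴴ).PosSemidef :=
    hProj.mul_mul_conjTranspose_same U
  have hDeq : U * (1 - Aᴴ * B⁻¹ * A) * Uᴴ
      = Q * (P0 * (P⁻¹ * P0)) * Qᴴ - B0 * B⁻¹ * B0 := by
    have e : U * (1 - Aᴴ * B⁻¹ * A) * Uᴴ = U * Uᴴ - U * Aᴴ * (B⁻¹ * (A * Uᴴ)) := by
      rw [Matrix.mul_sub, Matrix.mul_one, Matrix.sub_mul]
      simp only [Matrix.mul_assoc]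
    rw [e, hUU, hUA, hAU]
    simp only [Matrix.mul_assoc]
  haveI : Invertible B0 := hB0.isUnit.invertible
  haveI : Invertible B := hB.isUnit.invertible
  set W : Matrix (Fin T) (Fin T) ℂ := B0⁻¹ * M * B0⁻¹ with hWdef
  have hW : W.PosSemidef := by
    have := hM.mul_mul_conjTranspose_same B0⁻¹
    rwa [hB0.inv.isHermitian.eq] at this
  have key := aux_trace_mul_nonneg hW hDel
  rw [hDeq, Matrix.mul_sub, trace_sub] at key
  have t1 : (W * (B0 * B⁻¹ * B0)).trace = (M * B⁻¹).trace := by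
    have e : W * (B0 * B⁻¹ * B0) = B0⁻¹ * (M * B⁻¹) * B0 := by
      rw [hWdef]
      simp only [Matrix.mul_assoc, Matrix.inv_mul_cancel_left_of_invertible]
    rw [e, trace_mul_cycle, Matrix.mul_inv_of_invertible, Matrix.one_mul]
  have comm : P⁻¹ * P0 = P0 * P⁻¹ := by
    rw [hPinv, hP0def, diagonal_mul_diagonal, diagonal_mul_diagonal]
    exact dEq _ _ fun l => mul_comm _ _
  have t2 : (W * (Q * (P0 * (P⁻¹ * P0)) * Qᴴ)).trace
      = (P0 * Qᴴ * B0⁻¹ * M * B0⁻¹ * Q * P0 * P⁻¹).trace := by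
    have l2 : W * (Q * (P0 * (P⁻¹ * P0)) * Qᴴ)
        = (B0⁻¹ * (M * (B0⁻¹ * (Q * (P0 * (P⁻¹ * P0)))))) * Qᴴ := by
      rw [hWdef]; simp only [Matrix.mul_assoc]
    have r2 : P0 * Qᴴ * B0⁻¹ * M * B0⁻¹ * Q * P0 * P⁻¹
        = P0 * (Qᴴ * (B0⁻¹ * (M * (B0⁻¹ * (Q * (P0 * P⁻¹)))))) := by
      simp only [Matrix.mul_assoc]
    have m2 : Qᴴ * (B0⁻¹ * (M * (B0⁻¹ * (Q * (P0 * (P⁻¹ * P0))))))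
        = Qᴴ * (B0⁻¹ * (M * (B0⁻¹ * (Q * (P0 * P⁻¹))))) * P0 := by
      simp only [Matrix.mul_assoc, comm]
    rw [l2, r2, Matrix.trace_mul_comm _ Qᴴ, Matrix.trace_mul_comm P0, m2]
  rw [t1, t2] at key
  exact sub_nonneg.mp key
end
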